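/- Let f ∈ C³(ℝ,ℝ) satisfy hypotheses (H1)–(H3) with f''(0) > 0, and let z : ℝ → ℝ be an entire solution of x'(t) = f(x(t−1)) with m < 0 < M, m ≤ z(t) ≤ M for all t ∈ ℝ, and z(1) = m. If f'(0) ∈ [−1.5, 0), then m > μ = 2f'(0)/f''(0) and r(r(−r(M)/2)) > μ (in particular all these expressions are well defined, i.e. the relevant arguments lie in (μ, +∞)). If f'(0) ∈ [−1.5, −1.25], then moreover m > ν = 2A'(0)/A''(0). -/

import Mathlib

open Real Set

/-- Schwarzian derivative of `f` at `x`. -/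
noncomputable def Schwarzian (f : ℝ → ℝ) (x : ℝ) : ℝ :=
  iteratedDeriv 3 f x / deriv f x - (3 / 2) * (iteratedDeriv 2 f x / deriv f x) ^ 2

/-- Hypotheses (H1)-(H3): `f ∈ C³`, negative feedback with `f'(0) < 0`,
boundedness below, at most one critical point which is a local extremum,
and negative Schwarzian wherever `f' ≠ 0`. -/
def HypH (f : ℝ → ℝ) : Prop :=
  ContDiff ℝ 3 f ∧
  (∀ x : ℝ, x ≠ 0 → x * f x < 0) ∧
  deriv f 0 < 0 ∧
  (∃ C : ℝ, ∀ x : ℝ, C ≤ f x) ∧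
  (∀ u v : ℝ, deriv f u = 0 → deriv f v = 0 → u = v) ∧
  (∀ u : ℝ, deriv f u = 0 → IsLocalExtr f u) ∧
  (∀ u : ℝ, deriv f u ≠ 0 → Schwarzian f u < 0)

/-- The rational comparison function `r(x; a, b) = a²x/(a - bx)`. -/
noncomputable def rfun (a b : ℝ) (x : ℝ) : ℝ := a ^ 2 * x / (a - b * x)

/-- `A(x) = x + r(x) + (1/r(x)) ∫_x^0 r(t) dt`, with `A(0) = 0`. -/
noncomputable def Afun (a b : ℝ) (x : ℝ) : ℝ :=
  if x = 0 then 0 else x + rfun a b x + (1 / rfun a b x) * ∫ t in x..0, rfun a b t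

/-- `B(x) = (1/r(x)) ∫_{-r(x)}^0 r(s) ds`, with `B(0) = 0`. -/
noncomputable def Bfun (a b : ℝ) (x : ℝ) : ℝ :=
  if x = 0 then 0 else (1 / rfun a b x) * ∫ s in (-(rfun a b x))..0, rfun a b s

/-- `D(x) = A(x)` if `r(x) < -x`, and `D(x) = B(x)` otherwise. -/
noncomputable def Dfun (a b : ℝ) (x : ℝ) : ℝ :=
  if rfun a b x < -x then Afun a b x else Bfun a b x


lemma iter23 (f : ℝ → ℝ) : iteratedDeriv 2 f = deriv (deriv f) ∧ iteratedDeriv 3 f = deriv (deriv (deriv f)) := by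
  constructor
  · rw [show (2:ℕ) = 1+1 from rfl, iteratedDeriv_succ, iteratedDeriv_one]
  · rw [show (3:ℕ) = 2+1 from rfl, iteratedDeriv_succ, show (2:ℕ) = 1+1 from rfl,
      iteratedDeriv_succ, iteratedDeriv_one]

lemma derivs_exist (f : ℝ → ℝ) (hf : ContDiff ℝ 3 f) :
    (∀ t, HasDerivAt f (deriv f t) t) ∧ (∀ t, HasDerivAt (deriv f) (deriv (deriv f) t) t) ∧
    (∀ t, HasDerivAt (deriv (deriv f)) (deriv (deriv (deriv f)) t) t) := by
  have h3 : ContDiff ℝ ((2:ℕ)+1) f := by exact_mod_cast hf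
  obtain ⟨hd1, -, hr2⟩ := contDiff_succ_iff_deriv.mp h3
  have h2 : ContDiff ℝ ((1:ℕ)+1) (deriv f) := by exact_mod_cast hr2
  obtain ⟨hd2, -, hr1⟩ := contDiff_succ_iff_deriv.mp h2
  have h1 : ContDiff ℝ ((0:ℕ)+1) (deriv (deriv f)) := by exact_mod_cast hr1
  obtain ⟨hd3, -, -⟩ := contDiff_succ_iff_deriv.mp h1
  exact ⟨fun t => (hd1 t).hasDerivAt, fun t => (hd2 t).hasDerivAt, fun t => (hd3 t).hasDerivAt⟩

lemma f_zero (f : ℝ → ℝ) (hc : Continuous f) (hsign : ∀ x : ℝ, x ≠ 0 → x * f x < 0) : f 0 = 0 := by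
  have hneg : ∀ y > (0:ℝ), f y ≤ 0 := by intro y hy; nlinarith [hsign y (ne_of_gt hy)]
  have hpos : ∀ y < (0:ℝ), 0 ≤ f y := by intro y hy; nlinarith [hsign y (ne_of_lt hy)]
  have h1 : f 0 ≤ 0 := by
    have ht : Filter.Tendsto f (nhdsWithin 0 (Ioi 0)) (nhds (f 0)) := (hc.continuousAt).continuousWithinAt
    exact le_of_tendsto ht (eventually_nhdsWithin_of_forall (fun y hy => hneg y hy))
  have h2 : 0 ≤ f 0 := by
    have ht : Filter.Tendsto f (nhdsWithin 0 (Iio 0)) (nhds (f 0)) := (hc.continuousAt).continuousWithinAt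
    exact ge_of_tendsto ht (eventually_nhdsWithin_of_forall (fun y hy => hpos y hy))
  linarith

lemma rmono (a b : ℝ) (ha : a < 0) (hb : 0 < b) {y1 y2 : ℝ} (h0 : 0 ≤ y1) (h12 : y1 ≤ y2) :
    rfun a b y2 ≤ rfun a b y1 := by
  have d1 : a - b * y1 < 0 := by nlinarith
  have d2 : a - b * y2 < 0 := by nlinarith
  have d1' : a - b * y1 ≠ 0 := d1.ne
  have d2' : a - b * y2 ≠ 0 := d2.ne
  have key : rfun a b y1 - rfun a b y2 = a^3*(y1-y2)/((a-b*y1)*(a-b*y2)) := by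
    rw [rfun, rfun, div_sub_div _ _ d1' d2']; congr 1; ring
  have ha3 : a^3 < 0 := Odd.pow_neg (by decide) ha
  have hnum : 0 ≤ a^3*(y1-y2) := mul_nonneg_of_nonpos_of_nonpos ha3.le (by linarith)
  have hden : 0 < (a-b*y1)*(a-b*y2) := mul_pos_of_neg_of_neg d1 d2
  linarith [div_nonneg hnum hden.le]

lemma rlb (a b : ℝ) (ha : a < 0) (hb : 0 < b) {y : ℝ} (hy : 0 < y) :
    -(a^2)/b < rfun a b y ∧ rfun a b y < 0 := by
  have d : a - b * y < 0 := by nlinarith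
  have ha3 : a^3 < 0 := Odd.pow_neg (by decide) ha
  have ha2 : 0 < a^2 := pow_two_pos_of_ne_zero ha.ne
  have d' : a - b * y ≠ 0 := d.ne
  constructor
  · have key : rfun a b y - (-(a^2)/b) = a^3/((a-b*y)*b) := by
      rw [rfun, div_sub_div _ _ d' hb.ne']; congr 1; ring
    have : 0 < a^3/((a-b*y)*b) := div_pos_of_neg_of_neg ha3 (by nlinarith)
    linarith
  · exact div_neg_of_pos_of_neg (by nlinarith) d

set_option maxHeartbeats 1000000 in
lemma comp_main (f : ℝ → ℝ) (hf : HypH f) (a b : ℝ) (haeq : a = deriv f 0)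
    (hbeq : b = iteratedDeriv 2 f 0 / 2) (h2 : 0 < iteratedDeriv 2 f 0) :
    ∀ x, 0 < x → rfun a b x ≤ f x := by
  obtain ⟨hC3, hsign, ha0, -, huniq, hext, hschw⟩ := hf
  obtain ⟨hdf, hdp, hdq⟩ := derivs_exist f hC3
  obtain ⟨hi2, hi3⟩ := iter23 f
  set p := deriv f with hpdef
  set q := deriv (deriv f) with hqdef
  set s := deriv (deriv (deriv f)) with hsdef
  have hp0 : p 0 = a := haeq.symm
  have ha : a < 0 := haeq ▸ ha0
  have hb : 0 < b := by rw [hbeq]; linarith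
  have hq0 : q 0 = 2*b := by rw [hbeq, hi2]; ring
  have hfc : Continuous f := hC3.continuous
  have hf0 : f 0 = 0 := f_zero f hfc hsign
  have hpc : Continuous p := continuous_iff_continuousAt.mpr (fun t => (hdp t).continuousAt)
  -- key Schwarzian inequality
  have hkey : ∀ u, p u ≠ 0 → s u * p u < 3/2 * (q u)^2 := by
    intro u hu
    have h := hschw u hu
    rw [Schwarzian, hi3, hi2] at h
    have he : s u * p u - 3/2*(q u)^2 = (s u / p u - 3/2 * (q u / p u)^2) * (p u)^2 := by
      field_simp
    nlinarith [mul_neg_of_neg_of_pos h (pow_two_pos_of_ne_zero hu)]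
  have hden : ∀ {y:ℝ}, 0 ≤ y → a - b*y < 0 := fun {y} hy => by nlinarith
  have hrd : ∀ y:ℝ, 0 ≤ y → HasDerivAt (rfun a b) (a^3/(a-b*y)^2) y := by
    intro y hy
    have hd := hden hy
    have h1 : HasDerivAt (fun t:ℝ => a^2*t) (a^2) y := by
      simpa using (hasDerivAt_id y).const_mul (a^2)
    have h2' : HasDerivAt (fun t:ℝ => a - b*t) (-b) y := by
      simpa using ((hasDerivAt_id y).const_mul b).const_sub a
    have hd' : a - b * y ≠ 0 := hd.ne
    have h3 := h1.div h2' hd'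
    have : HasDerivAt (fun t:ℝ => a^2*t/(a-b*t)) (a^3/(a-b*y)^2) y := by
      refine h3.congr_deriv ?_
      ring
    exact this
  set h := fun t:ℝ => (-(p t)) ^ (-(1/2) : ℝ) with hhdef
  set H1 := fun t:ℝ => q t * (-(p t)) ^ (-(3/2) : ℝ) / 2 with hH1def
  have hh : ∀ t, p t < 0 → HasDerivAt h (H1 t) t := by
    intro t ht
    have hnp : (0:ℝ) < -(p t) := by linarith
    have hd : HasDerivAt (fun y => -(p y)) (-(q t)) t := (hdp t).neg
    have h' := hd.rpow_const (p := (-(1/2):ℝ)) (Or.inl hnp.ne')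
    convert h' using 1
    rw [show ((-(1/2):ℝ) - 1) = (-(3/2):ℝ) by norm_num]
    ring
  have hH1d : ∀ t, p t < 0 → HasDerivAt H1
      ((s t * (-(p t)) ^ (-(3/2):ℝ) + (3/2) * (q t)^2 * (-(p t)) ^ (-(5/2):ℝ)) / 2) t := by
    intro t ht
    have hnp : (0:ℝ) < -(p t) := by linarith
    have hd : HasDerivAt (fun y => -(p y)) (-(q t)) t := (hdp t).neg
    have hg := hd.rpow_const (p := (-(3/2):ℝ)) (Or.inl hnp.ne')
    have h' := ((hdq t).mul hg).div_const 2
    refine HasDerivAt.congr_deriv (f := H1) h' ?_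
    rw [show ((-(3/2):ℝ)-1) = (-(5/2):ℝ) by norm_num]
    ring
  have hH1pos : ∀ t, p t < 0 →
      0 < (s t * (-(p t)) ^ (-(3/2):ℝ) + (3/2) * (q t)^2 * (-(p t)) ^ (-(5/2):ℝ)) / 2 := by
    intro t ht
    have hnp : (0:ℝ) < -(p t) := by linarith
    have e1 : (-(p t)) ^ (-(3/2):ℝ) = (-(p t)) ^ (-(5/2):ℝ) * (-(p t)) := by
      rw [show (-(3/2):ℝ) = (-(5/2):ℝ)+1 by norm_num, Real.rpow_add_one hnp.ne']
    have h5 : 0 < (-(p t)) ^ (-(5/2):ℝ) := Real.rpow_pos_of_pos hnp _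
    have hk := hkey t ht.ne
    have fact2 : 0 < (3/2*(q t)^2 - s t * p t) * ((-(p t)) ^ (-(5/2):ℝ)) :=
      mul_pos (by linarith) h5
    have fact3 : s t * ((-(p t)) ^ (-(3/2):ℝ)) = s t * ((-(p t)) ^ (-(5/2):ℝ) * (-(p t))) := by
      rw [e1]
    nlinarith [fact2, fact3]
  -- step 4 : pointwise derivative comparison
  have step4 : ∀ X, 0 < X → (∀ y ∈ Icc (0:ℝ) X, p y < 0) → a^3/(a-b*X)^2 ≤ p X := by
    intro X hX hneg
    have hmem0 : (0:ℝ) ∈ Icc (0:ℝ) X := ⟨le_refl 0, hX.le⟩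
    have hmemX : X ∈ Icc (0:ℝ) X := ⟨hX.le, le_refl X⟩
    have hmono : MonotoneOn H1 (Icc (0:ℝ) X) := by
      apply monotoneOn_of_deriv_nonneg (convex_Icc _ _)
      · exact fun y hy => ((hH1d y (hneg y hy)).continuousAt).continuousWithinAt
      · intro y hy
        rw [interior_Icc] at hy
        exact ((hH1d y (hneg y (Ioo_subset_Icc_self hy))).differentiableAt).differentiableWithinAt
      · intro y hy
        rw [interior_Icc] at hy
        have h' := hneg y (Ioo_subset_Icc_self hy)
        rw [(hH1d y h').deriv]
        exact (hH1pos y h').le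
    have hna : (0:ℝ) < -a := by linarith
    set u : ℝ := (-a) ^ (-(3/2):ℝ) with hudef
    have hu : 0 < u := Real.rpow_pos_of_pos hna _
    set c0 : ℝ := b * u with hc0def
    have hH10 : H1 0 = c0 := by
      show q 0 * (-(p 0)) ^ (-(3/2):ℝ) / 2 = c0
      rw [hq0, hp0, hc0def, hudef]; ring
    have hφd : ∀ y, p y < 0 → HasDerivAt (fun t => h t - c0 * t) (H1 y - c0) y := by
      intro y hy
      have := (hh y hy).sub ((hasDerivAt_id y).const_mul c0)
      exact HasDerivAt.congr_deriv (f := fun t => h t - c0 * t) this (by ring)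
    have hφmono : MonotoneOn (fun t => h t - c0 * t) (Icc (0:ℝ) X) := by
      apply monotoneOn_of_deriv_nonneg (convex_Icc _ _)
      · exact fun y hy => ((hφd y (hneg y hy)).continuousAt).continuousWithinAt
      · intro y hy
        rw [interior_Icc] at hy
        exact ((hφd y (hneg y (Ioo_subset_Icc_self hy))).differentiableAt).differentiableWithinAt
      · intro y hy
        rw [interior_Icc] at hy
        have hy' := Ioo_subset_Icc_self hy
        rw [(hφd y (hneg y hy')).deriv]
        have := hmono hmem0 hy' hy.1.le
        rw [hH10] at this
        linarith
    have hφ0X : h 0 - c0*0 ≤ h X - c0*X := hφmono hmem0 hmemX hX.le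
    have hh0 : h 0 = (-a:ℝ) ^ (-(1/2):ℝ) := by
      show (-(p 0)) ^ (-(1/2):ℝ) = (-a:ℝ) ^ (-(1/2):ℝ)
      rw [hp0]
    have e2 : (-a:ℝ) ^ (-(1/2):ℝ) = u * (-a) := by
      rw [show (-(1/2):ℝ) = (-(3/2):ℝ)+1 by norm_num, Real.rpow_add_one hna.ne', hudef]
    have hhX : (b*X - a) * u ≤ h X := by
      rw [hh0, e2] at hφ0X
      nlinarith [hφ0X]
    have hrXpos : 0 < (b*X - a) * u := mul_pos (by nlinarith) hu
    have hnpX : (0:ℝ) < -(p X) := by linarith [hneg X hmemX]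
    have hsqeq : h X ^ 2 * (-(p X)) = 1 := by
      show ((-(p X)) ^ (-(1/2):ℝ))^2 * (-(p X)) = 1
      rw [← Real.rpow_natCast ((-(p X)) ^ (-(1/2):ℝ)) 2, ← Real.rpow_mul hnpX.le,
        show ((-(1/2):ℝ) * (2:ℕ)) = (-1:ℝ) by norm_num, Real.rpow_neg_one]
      exact inv_mul_cancel₀ hnpX.ne'
    have husq : u^2 * (-a)^3 = 1 := by
      rw [hudef, ← Real.rpow_natCast ((-a) ^ (-(3/2):ℝ)) 2, ← Real.rpow_mul hna.le,
        ← Real.rpow_natCast (-a) 3, ← Real.rpow_add hna]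
      norm_num
    have hineq : ((b*X - a)*u)^2 ≤ h X^2 := by nlinarith [hhX, hrXpos]
    have t1 : ((b*X-a)*u)^2 * (-(p X)) ≤ h X^2 * (-(p X)) :=
      mul_le_mul_of_nonneg_right hineq hnpX.le
    rw [hsqeq] at t1
    have t2 : ((b*X-a)*u)^2 * (-(p X)) * (-a)^3 ≤ 1 * (-a)^3 :=
      mul_le_mul_of_nonneg_right t1 (pow_nonneg hna.le 3)
    have e5 : ((b*X-a)*u)^2 * (-(p X)) * (-a)^3 = (b*X-a)^2 * (-(p X)) * (u^2*(-a)^3) := by ring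
    rw [e5, husq, mul_one, one_mul] at t2
    have hSpos : 0 < (a-b*X)^2 := pow_two_pos_of_ne_zero (hden hX.le).ne
    rw [div_le_iff₀ hSpos]
    have e6 : (-a:ℝ)^3 = -(a^3) := by ring
    have e7 : (b*X-a)^2 * (-(p X)) = -(p X * (a-b*X)^2) := by ring
    rw [e6, e7] at t2
    linarith
  -- step 5
  have hcomp' : ∀ X, 0 < X → (∀ y ∈ Ico (0:ℝ) X, p y < 0) → rfun a b X ≤ f X := by
    intro X hX hneg
    have hgd : ∀ y:ℝ, 0 ≤ y → HasDerivAt (fun t => f t - rfun a b t) (p y - a^3/(a-b*y)^2) y :=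
      fun y hy => (hdf y).sub (hrd y hy)
    have hgmono : MonotoneOn (fun t => f t - rfun a b t) (Icc (0:ℝ) X) := by
      apply monotoneOn_of_deriv_nonneg (convex_Icc _ _)
      · exact fun y hy => ((hgd y hy.1).continuousAt).continuousWithinAt
      · intro y hy
        rw [interior_Icc] at hy
        exact ((hgd y hy.1.le).differentiableAt).differentiableWithinAt
      · intro y hy
        rw [interior_Icc] at hy
        rw [(hgd y hy.1.le).deriv]
        have := step4 y hy.1 (fun t ht => hneg t ⟨ht.1, lt_of_le_of_lt ht.2 hy.2⟩)
        linarith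
    have h0X : f 0 - rfun a b 0 ≤ f X - rfun a b X :=
      hgmono ⟨le_refl 0, hX.le⟩ ⟨hX.le, le_refl X⟩ hX.le
    have hr0 : rfun a b 0 = 0 := by simp [rfun]
    rw [hf0, hr0] at h0X
    linarith
  -- sign propagation
  have hsign_seg : ∀ u v:ℝ, p u < 0 → (∀ y ∈ uIcc u v, p y ≠ 0) → p v < 0 := by
    intro u v hu hne
    by_contra hge
    push_neg at hge
    have h0m : (0:ℝ) ∈ uIcc (p u) (p v) := by
      rw [Set.mem_uIcc]; left; exact ⟨hu.le, hge⟩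
    obtain ⟨y, hy, hy0⟩ := intermediate_value_uIcc (hpc.continuousOn) h0m
    exact hne y hy hy0
  have hpa : p 0 < 0 := by rw [hp0]; exact ha
  intro x hx
  by_cases hex : ∃ c, p c = 0
  · obtain ⟨c, hc⟩ := hex
    have hc0 : c ≠ 0 := by
      intro hh
      rw [hh] at hc
      rw [hc] at hpa
      exact lt_irrefl 0 hpa
    have huniq' : ∀ y, p y = 0 → y = c := fun y hy => huniq y c hy hc
    rcases lt_or_gt_of_ne hc0 with hcneg | hcpos
    · have hneg : ∀ y:ℝ, 0 ≤ y → p y < 0 := by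
        intro y hy
        apply hsign_seg 0 y hpa
        intro t ht hte
        rw [huniq' t hte] at ht
        rw [uIcc_of_le hy] at ht
        have := ht.1
        linarith
      exact hcomp' x hx (fun y hy => hneg y hy.1)
    · have hnegc : ∀ y:ℝ, 0 ≤ y → y < c → p y < 0 := by
        intro y hy hyc
        apply hsign_seg 0 y hpa
        intro t ht hte
        rw [huniq' t hte] at ht
        rw [uIcc_of_le hy] at ht
        have := ht.2
        linarith
      have hrcont : ContinuousAt (rfun a b) c := by
        have hcd : a - b * c ≠ 0 := (hden hcpos.le).ne
        have : ContinuousAt (fun t:ℝ => a^2*t/(a-b*t)) c := by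
          apply ContinuousAt.div
          · fun_prop
          · fun_prop
          · exact hcd
        exact this
      have hrcfc : rfun a b c ≤ f c := by
        have hcont : ContinuousAt (fun t => f t - rfun a b t) c := (hfc.continuousAt).sub hrcont
        have htend : Filter.Tendsto (fun t => f t - rfun a b t) (nhdsWithin c (Iio c))
            (nhds (f c - rfun a b c)) := hcont.continuousWithinAt
        have hev : ∀ᶠ t in nhdsWithin c (Iio c), 0 ≤ f t - rfun a b t := by
          filter_upwards [Ioo_mem_nhdsLT_of_mem (show c ∈ Ioc (0:ℝ) c from ⟨hcpos, le_refl c⟩)] with t ht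
          have := hcomp' t ht.1 (fun y hy => hnegc y hy.1 (hy.2.trans ht.2))
          linarith
        have := ge_of_tendsto htend hev
        linarith
      rcases lt_trichotomy x c with hxc | hxc | hxc
      · exact hcomp' x hx (fun y hy => hnegc y hy.1 (hy.2.trans hxc))
      · rw [hxc]; exact hrcfc
      · have hppos : ∀ y, c < y → 0 < p y := by
          intro y hcy
          have hyne : p y ≠ 0 := by
            intro hh
            rw [huniq' y hh] at hcy
            exact lt_irrefl c hcy
          rcases hyne.lt_or_gt with hplt | hpgt
          · exfalso
            have hnegR : ∀ t, c < t → t ≤ y → p t < 0 := by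
              intro t h1 h2'
              apply hsign_seg y t hplt
              intro w hw hwe
              rw [huniq' w hwe] at hw
              rcases Set.mem_uIcc.mp hw with hcase | hcase
              · linarith [hcase.1]
              · linarith [hcase.1]
            have hanti : StrictAntiOn f (Icc c y) := by
              apply strictAntiOn_of_deriv_neg (convex_Icc _ _) (hfc.continuousOn)
              intro t ht
              rw [interior_Icc] at ht
              exact hnegR t ht.1 ht.2.le
            have hantiL : StrictAntiOn f (Icc 0 c) := by
              apply strictAntiOn_of_deriv_neg (convex_Icc _ _) (hfc.continuousOn)
              intro t ht
              rw [interior_Icc] at ht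
              exact hnegc t ht.1.le ht.2
            rcases hext c hc with hminl | hmaxl
            · have h1 : ∀ᶠ t in nhdsWithin c (Ioi c), f c ≤ f t :=
                hminl.filter_mono nhdsWithin_le_nhds
              have h2' : ∀ᶠ t in nhdsWithin c (Ioi c), t ∈ Ioo c y :=
                Filter.eventually_of_mem (Ioo_mem_nhdsGT_of_mem ⟨le_refl c, hcy⟩) (fun t ht => ht)
              obtain ⟨t, ht1, ht2⟩ := (h1.and h2').exists
              have := hanti (show c ∈ Icc c y from ⟨le_refl c, hcy.le⟩)
                (show t ∈ Icc c y from ⟨ht2.1.le, ht2.2.le⟩) ht2.1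
              linarith
            · have h1 : ∀ᶠ t in nhdsWithin c (Iio c), f t ≤ f c :=
                hmaxl.filter_mono nhdsWithin_le_nhds
              have h2' : ∀ᶠ t in nhdsWithin c (Iio c), t ∈ Ioo 0 c :=
                Filter.eventually_of_mem (Ioo_mem_nhdsLT_of_mem ⟨hcpos, le_refl c⟩) (fun t ht => ht)
              obtain ⟨t, ht1, ht2⟩ := (h1.and h2').exists
              have := hantiL (show t ∈ Icc (0:ℝ) c from ⟨ht2.1.le, ht2.2.le⟩)
                (show c ∈ Icc (0:ℝ) c from ⟨hcpos.le, le_refl c⟩) ht2.2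
              linarith
          · exact hpgt
        have hfmono : MonotoneOn f (Icc c x) := by
          apply monotoneOn_of_deriv_nonneg (convex_Icc _ _) (hfc.continuousOn)
          · intro t ht
            exact (hdf t).differentiableAt.differentiableWithinAt
          · intro t ht
            rw [interior_Icc] at ht
            exact (hppos t ht.1).le
        have h1 := hfmono (show c ∈ Icc c x from ⟨le_refl c, hxc.le⟩)
          (show x ∈ Icc c x from ⟨hxc.le, le_refl x⟩) hxc.le
        have h2' := rmono a b ha hb hcpos.le hxc.le
        linarith
  · have hneg : ∀ y:ℝ, p y < 0 := by
      intro y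
      apply hsign_seg 0 y hpa
      intro t _ hte
      exact hex ⟨t, hte⟩
    exact hcomp' x hx (fun y _ => hneg y)

lemma exp_half_lt_two : Real.exp (1/2) < 2 := by
  have hh : Real.exp (1/2) ^ 2 < 2^2 := by
    rw [← Real.exp_nat_mul]; norm_num; nlinarith [Real.exp_one_lt_d9]
  exact lt_of_pow_lt_pow_left₀ 2 (by norm_num) hh

lemma loglb (a : ℝ) (ha : a < 0) (h15 : -1.5 ≤ a) : -a - 1 < Real.log (1-a) := by
  rw [Real.lt_log_iff_exp_lt (by linarith)]
  rcases le_or_gt (-1:ℝ) a with hc | hc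
  · calc Real.exp (-a-1) ≤ Real.exp 0 := Real.exp_le_exp.mpr (by linarith)
    _ = 1 := Real.exp_zero
    _ < 1 - a := by linarith
  · have hA : Real.exp (-a-1) ≤ Real.exp (1/2) := Real.exp_le_exp.mpr (by linarith)
    linarith [exp_half_lt_two]

lemma log94 : (3:ℝ)/4 < Real.log (9/4) := by
  rw [Real.lt_log_iff_exp_lt (by norm_num)]
  have h1 : Real.exp 3 < 6561/256 := by
    calc Real.exp 3 = Real.exp 1 ^ (3:ℕ) := by rw [← Real.exp_nat_mul]; norm_num
    _ ≤ 2.7182818286^(3:ℕ) := pow_le_pow_left₀ (Real.exp_pos 1).le Real.exp_one_lt_d9.le 3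
    _ < 6561/256 := by norm_num
  have h : Real.exp (3/4) ^ 4 < (9/4:ℝ)^4 := by
    rw [← Real.exp_nat_mul]; norm_num; linarith
  exact lt_of_pow_lt_pow_left₀ 4 (by norm_num) h


set_option maxHeartbeats 1000000 in
/-- Corollary 3.5 (Corollary cy): with `m < 0 < M` as in Lemma 3.2, if
`f'(0) ∈ [-1.5, 0)` then `m > μ` and `r(r(-r(M)/2)) > μ`; if moreover
`f'(0) ∈ [-1.5, -1.25]`, then `m > ν`. -/
theorem domain_estimates_m_M
    (f : ℝ → ℝ) (hf : HypH f) (h2 : 0 < iteratedDeriv 2 f 0)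
    (a b a₁ b₁ μ ν : ℝ)
    (haeq : a = deriv f 0) (hbeq : b = iteratedDeriv 2 f 0 / 2)
    (ha₁ : a₁ = a + 1 / 2) (hb₁ : b₁ = b * (1 + 1 / (6 * a)))
    (hμ : μ = a / b) (hν : ν = a₁ / b₁)
    (z : ℝ → ℝ) (hz : ∀ t : ℝ, HasDerivAt z (f (z (t - 1))) t)
    (m M : ℝ) (hm : m < 0) (hM : 0 < M)
    (hbd : ∀ t : ℝ, m ≤ z t ∧ z t ≤ M) (hmin : z 1 = m) :
    (deriv f 0 ∈ Set.Ico (-1.5 : ℝ) 0 →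
      μ < m ∧ μ < rfun a b (rfun a b (-(rfun a b M) / 2))) ∧
    (deriv f 0 ∈ Set.Icc (-1.5 : ℝ) (-1.25) → ν < m) := by
  have ha : a < 0 := haeq ▸ hf.2.2.1
  have hane : a ≠ 0 := ha.ne
  have hb : 0 < b := by rw [hbeq]; linarith
  have hbne : b ≠ 0 := hb.ne'
  have hfc : Continuous f := hf.1.continuous
  have hf0 : f 0 = 0 := f_zero f hfc hf.2.1
  have hcomp := comp_main f hf a b haeq hbeq h2
  have hzc : Continuous z := continuous_iff_continuousAt.mpr (fun t => (hz t).continuousAt)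
  have hic : Continuous (fun s : ℝ => f (z (s - 1))) := by fun_prop
  have hminloc : IsLocalMin z 1 :=
    Filter.Eventually.of_forall (fun t => by rw [hmin]; exact (hbd t).1)
  have hz0 : z 0 = 0 := by
    have hd0 : f (z (1-1)) = 0 := hminloc.hasDerivAt_eq_zero (hz 1)
    have hd0' : f (z 0) = 0 := by norm_num at hd0; exact hd0
    by_contra hne
    have h := hf.2.1 (z 0) hne
    rw [hd0', mul_zero] at h
    exact lt_irrefl 0 h
  have hfnn : ∀ y:ℝ, y ≤ 0 → 0 ≤ f y := by
    intro y hy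
    rcases eq_or_lt_of_le hy with he | hlt
    · rw [he, hf0]
    · nlinarith [hf.2.1 y (ne_of_lt hlt)]
  have hflb : ∀ y:ℝ, -(a^2)/b ≤ f y := by
    intro y
    rcases le_or_gt y 0 with hy | hy
    · have h1 := hfnn y hy
      have h3 : -(a^2)/b ≤ 0 := div_nonpos_of_nonpos_of_nonneg (by nlinarith [sq_nonneg a]) hb.le
      linarith
    · have h1 := (rlb a b ha hb hy).1
      have h4 := hcomp y hy
      linarith
  have hzub : ∀ u ∈ Icc (-1:ℝ) 0, z u ≤ a^2/b * (-u) := by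
    intro u hu
    have hFTC : ∫ s in u..(0:ℝ), f (z (s-1)) = z 0 - z u :=
      intervalIntegral.integral_eq_sub_of_hasDerivAt (fun t _ => hz t) (hic.intervalIntegrable u 0)
    have hmono := intervalIntegral.integral_mono_on (μ := MeasureTheory.volume) hu.2
      ((continuous_const (y := -(a^2)/b)).intervalIntegrable u 0) (hic.intervalIntegrable u 0)
      (fun t _ => hflb (z (t-1)))
    rw [intervalIntegral.integral_const, hFTC, hz0, smul_eq_mul] at hmono
    have he : (0 - u) * (-(a^2)/b) = -(a^2/b * (-u)) := by field_simp; ring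
    rw [he] at hmono
    linarith
  have hmint : m = ∫ u in (-1:ℝ)..0, f (z u) := by
    have hFTC : ∫ s in (0:ℝ)..1, f (z (s-1)) = z 1 - z 0 :=
      intervalIntegral.integral_eq_sub_of_hasDerivAt (fun t _ => hz t) (hic.intervalIntegrable 0 1)
    rw [hz0, hmin, sub_zero] at hFTC
    have hsub : (∫ x in (0:ℝ)..1, f (z (x-1))) = ∫ x in (0-1:ℝ)..(1-1:ℝ), f (z x) :=
      intervalIntegral.integral_comp_sub_right (fun u => f (z u)) 1
    rw [hsub] at hFTC
    norm_num at hFTC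
    exact hFTC.symm
  have hdenu : ∀ u ∈ Icc (-1:ℝ) 0, a + a^2*u < 0 := by
    intro u hu
    nlinarith [mul_nonpos_of_nonneg_of_nonpos (sq_nonneg a) hu.2]
  have hpt : ∀ u ∈ Icc (-1:ℝ) 0, rfun a b (a^2/b * (-u)) ≤ f (z u) := by
    intro u hu
    have harg : 0 ≤ a^2/b * (-u) := by
      apply mul_nonneg (div_nonneg (sq_nonneg a) hb.le)
      linarith [hu.2]
    rcases le_or_gt (z u) 0 with hzu | hzu
    · have h1 := hfnn (z u) hzu
      have h3 : rfun a b (a^2/b * (-u)) ≤ rfun a b 0 := rmono a b ha hb (le_refl 0) harg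
      have hr0 : rfun a b 0 = 0 := by simp [rfun]
      linarith
    · have h1 := hcomp (z u) hzu
      have h3 : rfun a b (a^2/b * (-u)) ≤ rfun a b (z u) :=
        rmono a b ha hb hzu.le (hzub u hu)
      linarith
  have hψint : IntervalIntegrable (fun u => rfun a b (a^2/b * (-u))) MeasureTheory.volume (-1) 0 := by
    apply ContinuousOn.intervalIntegrable
    rw [uIcc_of_le (by norm_num : (-1:ℝ) ≤ 0)]
    simp only [rfun]
    apply ContinuousOn.div
    · fun_prop
    · fun_prop
    · intro u hu
      have hd := hdenu u hu
      have heq : a - b * (a^2/b * -u) = a + a^2*u := by field_simp; ring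
      rw [heq]
      exact hd.ne
  have Eint : (∫ u in (-1:ℝ)..0, rfun a b (a^2/b * (-u))) ≤ ∫ u in (-1:ℝ)..0, f (z u) := by
    apply intervalIntegral.integral_mono_on (by norm_num) hψint
      ((hfc.comp hzc).intervalIntegrable _ _) hpt
  have hFd : ∀ u ∈ uIcc (-1:ℝ) 0,
      HasDerivAt (fun u => -(a^2/b)*(u - (1/a)*Real.log (-(a + a^2*u)))) (rfun a b (a^2/b * (-u))) u := by
    intro u hu
    rw [uIcc_of_le (by norm_num : (-1:ℝ) ≤ 0)] at hu
    have hd := hdenu u hu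
    have hdne : a + a^2*u ≠ 0 := hd.ne
    have hinner : HasDerivAt (fun u:ℝ => -(a + a^2*u)) (-(a^2)) u := by
      exact (((hasDerivAt_id u).const_mul (a^2)).const_add a).neg.congr_deriv (by ring)
    have hlog : HasDerivAt (fun u:ℝ => Real.log (-(a + a^2*u))) (-(a^2) / -(a + a^2*u)) u :=
      hinner.log (by intro hh; apply hdne; linarith [neg_eq_zero.mp hh])
    have hFd' := (((hasDerivAt_id u).sub (hlog.const_mul (1/a))).const_mul (-(a^2/b)))
    refine hFd'.congr_deriv ?_
    simp only [rfun]
    rw [show a - b * (a^2/b * -u) = a + a^2*u by field_simp; ring, neg_div_neg_eq]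
    field_simp [hane, hbne, hdne]
    have h1au : 1 + a * u ≠ 0 := by intro h; apply hdne; linear_combination a * h
    linear_combination mul_inv_cancel₀ h1au
  have hEeq : (∫ u in (-1:ℝ)..0, rfun a b (a^2/b * (-u)))
      = (fun u => -(a^2/b)*(u - (1/a)*Real.log (-(a + a^2*u)))) 0
        - (fun u => -(a^2/b)*(u - (1/a)*Real.log (-(a + a^2*u)))) (-1) :=
    intervalIntegral.integral_eq_sub_of_hasDerivAt hFd hψint
  have hFval : (fun u => -(a^2/b)*(u - (1/a)*Real.log (-(a + a^2*u)))) 0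
        - (fun u => -(a^2/b)*(u - (1/a)*Real.log (-(a + a^2*u)))) (-1)
      = (-a^2 - a*Real.log (1-a))/b := by
    simp only
    rw [show -(a + a^2*(0:ℝ)) = -a by ring, show -(a + a^2*(-1:ℝ)) = (-a)*(1-a) by ring,
      Real.log_mul (by linarith) (by linarith)]
    field_simp
    ring
  have hEbound : (-a^2 - a*Real.log (1-a))/b ≤ m := by
    rw [hmint, ← hFval, ← hEeq]
    exact Eint
  constructor
  · intro hIco
    rw [← haeq] at hIco
    obtain ⟨h15, -⟩ := hIco
    have hN1 : -a - 1 < Real.log (1-a) := loglb a ha h15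
    have hμm : μ < m := by
      have hN : a < -a^2 - a*Real.log (1-a) := by
        nlinarith [mul_pos (neg_pos.mpr ha) (show (0:ℝ) < a+1+Real.log (1-a) by linarith)]
      have hd : a/b < (-a^2 - a*Real.log (1-a))/b := by gcongr
      rw [hμ]; linarith
    refine ⟨hμm, ?_⟩
    have hrM := rlb a b ha hb hM
    have hy0 : 0 < -(rfun a b M)/2 := by linarith [hrM.2]
    have hy2 : -(rfun a b M)/2 ≤ a^2/(2*b) := by
      have he : -(a^2)/b = -(a^2/b) := by ring
      have he2 : a^2/(2*b) = (a^2/b)/2 := by ring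
      rw [he] at hrM
      linarith [hrM.1]
    have hx1lt : rfun a b (-(rfun a b M)/2) < 0 := (rlb a b ha hb hy0).2
    have hx1gt : a/b < rfun a b (-(rfun a b M)/2) := by
      have hmono2 := rmono a b ha hb hy0.le hy2
      have h2a : (2:ℝ) - a ≠ 0 := ne_of_gt (by linarith)
      have key : rfun a b (a^2/(2*b)) = a^3/(b*(2-a)) := by
        rw [rfun, show a - b*(a^2/(2*b)) = (a*(2-a))/2 by field_simp [hbne]]
        field_simp [hane, hbne, h2a]
      have hval : a/b < a^3/(b*(2-a)) := by
        rw [div_lt_div_iff₀ hb (mul_pos hb (by linarith : (0:ℝ) < 2-a))]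
        nlinarith [mul_pos (mul_pos (mul_pos (neg_pos.mpr ha)
          (show (0:ℝ) < a+2 by linarith)) (show (0:ℝ) < 1-a by linarith)) hb]
      rw [key] at hmono2
      linarith
    have hfinal : 0 < rfun a b (rfun a b (-(rfun a b M)/2)) := by
      rw [rfun]
      have hdx : a - b * rfun a b (-(rfun a b M)/2) < 0 := by
        have := (div_lt_iff₀ hb).mp hx1gt
        linarith
      exact div_pos_of_neg_of_neg
        (mul_neg_of_pos_of_neg (pow_two_pos_of_ne_zero hane) hx1lt) hdx
    have hμ0 : μ < 0 := by rw [hμ]; exact div_neg_of_neg_of_pos ha hb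
    linarith
  · intro hIcc
    rw [← haeq] at hIcc
    obtain ⟨h15, h125⟩ := hIcc
    have hL94 : Real.log (9/4) ≤ Real.log (1-a) := Real.log_le_log (by norm_num) (by linarith)
    have hL34 : 3/4 < Real.log (1-a) := lt_of_lt_of_le log94 hL94
    have h6a : 6*a < 0 := by linarith
    have h6a1 : 6*a + 1 < 0 := by linarith
    have hb1pos : 0 < b₁ := by
      rw [hb₁]
      apply mul_pos hb
      have h1 : 1/(-(6*a)) ≤ 1/(7:ℝ) := one_div_le_one_div_of_le (by norm_num) (by linarith)
      have he : 1/(6*a) = -(1/(-(6*a))) := by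
        rw [one_div, one_div, inv_neg, neg_neg]
      rw [he]
      linarith
    have hνE : ν < (-a^2 - a*Real.log (1-a))/b := by
      rw [hν, div_lt_iff₀ hb1pos, ha₁, hb₁]
      have heq : (-a^2 - a*Real.log (1-a))/b * (b*(1 + 1/(6*a)))
          = (-a^2 - a*Real.log (1-a)) * (6*a+1)/(6*a) := by
        field_simp
      rw [heq, lt_div_iff_of_neg h6a]
      nlinarith [mul_pos (show (0:ℝ) < Real.log (1-a) - 3/4 by linarith)
          (show (0:ℝ) < a*(6*a+1) by nlinarith),
        mul_nonneg (show (0:ℝ) ≤ a + 1.5 by linarith) (show (0:ℝ) ≤ -a - 1.25 by linarith),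
        mul_nonneg (mul_nonneg (show (0:ℝ) ≤ a + 1.5 by linarith) (show (0:ℝ) ≤ -a - 1.25 by linarith)) (show (0:ℝ) ≤ -a by linarith)]
    linarith
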